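/- With J defined by the Bellman recursion, for every b ∈ {1,…,B} and v ∈ {1,…,V}, the set of minimizers over s ∈ S of the Bellman expression c(s) + h(b) + s·(−r(v) + J(b−1,V)) + (1−s)·(J(b,v−1) if v > 1, else J(b−1,V)) equals the set of minimizers over s ∈ S of c(s) − s·(r(v) + σ(b,v−1)). -/

import Mathlib

/-- `delta S hS c h r b v` is δ(b,v): δ(b,0) = 0 and
δ(b,v) = h(b) + min_{s ∈ S} (c(s) − s·(r(v) + Σ_{i=0}^{v−1} δ(b,i))). -/
noncomputable def delta (S : Finset ℝ) (hS : S.Nonempty) (c : ℝ → ℝ) (h r : ℕ → ℝ)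
    (b : ℕ) : ℕ → ℝ
  | 0 => 0
  | v + 1 => h b + S.inf' hS (fun s =>
      c s - s * (r (v + 1) + ∑ i ∈ (Finset.range (v + 1)).attach, delta S hS c h r b i.1))
decreasing_by exact Finset.mem_range.mp i.2

/-- `sigma S hS c h r b v` is σ(b,v) = Σ_{i=0}^{v} δ(b,i). -/
noncomputable def sigma (S : Finset ℝ) (hS : S.Nonempty) (c : ℝ → ℝ) (h r : ℕ → ℝ)
    (b v : ℕ) : ℝ :=
  ∑ i ∈ Finset.range (v + 1), delta S hS c h r b i

/-- `Jval S hS c h r V b v` is J(b,v) defined by the Bellman recursion: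
J(0,v) = 0 and for b ≥ 1,
J(b,v) = min_{s ∈ S} [c(s) + h(b) + s·(−r(v) + J(b−1,V))
  + (1−s)·(J(b,v−1) if v > 1 else J(b−1,V))]. -/
noncomputable def Jval (S : Finset ℝ) (hS : S.Nonempty) (c : ℝ → ℝ) (h r : ℕ → ℝ)
    (V : ℕ) : ℕ → ℕ → ℝ
  | 0, _ => 0
  | b + 1, v =>
    S.inf' hS (fun s =>
      c s + h (b + 1) + s * (-(r v) + Jval S hS c h r V b V) +
        (1 - s) * (if _hv : 1 < v then Jval S hS c h r V (b + 1) (v - 1)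
                   else Jval S hS c h r V b V))
termination_by b v => (b, v)
decreasing_by
  · exact Prod.Lex.left _ _ (Nat.lt_succ_self b)
  · exact Prod.Lex.right _ (by omega)

lemma inf'_add_const (S : Finset ℝ) (hS : S.Nonempty) (f : ℝ → ℝ) (a : ℝ) :
    S.inf' hS (fun s => f s + a) = S.inf' hS f + a := by
  apply le_antisymm
  · obtain ⟨x, hx, hfx⟩ := S.exists_mem_eq_inf' hS f
    rw [hfx]
    exact Finset.inf'_le _ hx
  · apply Finset.le_inf'
    intro s hs
    exact add_le_add_left (Finset.inf'_le _ hs) a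

lemma delta_succ (S : Finset ℝ) (hS : S.Nonempty) (c : ℝ → ℝ) (h r : ℕ → ℝ) (b v : ℕ) :
    delta S hS c h r b (v + 1) = h b + S.inf' hS (fun s =>
      c s - s * (r (v + 1) + ∑ i ∈ Finset.range (v + 1), delta S hS c h r b i)) := by
  rw [delta]
  congr 2
  funext s
  rw [Finset.sum_attach]

lemma Jval_eq (S : Finset ℝ) (hS : S.Nonempty) (c : ℝ → ℝ) (h r : ℕ → ℝ) (V b : ℕ) :
    ∀ v, 1 ≤ v → Jval S hS c h r V (b + 1) v
      = Jval S hS c h r V b V + sigma S hS c h r (b + 1) v := by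
  intro v hv
  induction v with
  | zero => omega
  | succ v ih =>
    rcases Nat.eq_zero_or_pos v with hv0 | hv1
    · subst hv0
      rw [Jval]
      have : (fun s => c s + h (b + 1) + s * (-(r 1) + Jval S hS c h r V b V) +
          (1 - s) * (if _hv : 1 < 1 then Jval S hS c h r V (b + 1) 0
                     else Jval S hS c h r V b V))
          = fun s => (c s - s * (r 1 + ∑ i ∈ Finset.range 1, delta S hS c h r (b+1) i))
              + (h (b + 1) + Jval S hS c h r V b V) := by
        funext s
        simp [Finset.sum_range_one, delta]
        ring
      rw [this, inf'_add_const]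
      have hd := delta_succ S hS c h r (b + 1) 0
      simp only [Nat.zero_add] at hd
      rw [sigma]
      simp [Finset.sum_range_succ, Finset.sum_range_one, delta, hd]
      ring
    · have ih' := ih hv1
      rw [Jval]
      have hlt : 1 < v + 1 := by omega
      have : (fun s => c s + h (b + 1) + s * (-(r (v+1)) + Jval S hS c h r V b V) +
          (1 - s) * (if _hv : 1 < v + 1 then Jval S hS c h r V (b + 1) (v + 1 - 1)
                     else Jval S hS c h r V b V))
          = fun s => (c s - s * (r (v+1) + ∑ i ∈ Finset.range (v+1), delta S hS c h r (b+1) i))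
              + (h (b + 1) + Jval S hS c h r V b V + sigma S hS c h r (b + 1) v) := by
        funext s
        rw [dif_pos hlt]
        simp only [Nat.add_sub_cancel]
        rw [ih']
        simp only [sigma]
        ring
      rw [this, inf'_add_const]
      have hd := delta_succ S hS c h r (b + 1) v
      simp only [sigma, Finset.sum_range_succ, hd]
      ring

open Classical

/-- The set of minimizers over s ∈ S of the Bellman expression equals the set of
minimizers over s ∈ S of c(s) − s·(r(v) + σ(b,v−1)). -/
theorem stmt1
    (S : Finset ℝ) (hS : S.Nonempty) (hS01 : ∀ s ∈ S, s ∈ Set.Icc (0 : ℝ) 1)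
    (c : ℝ → ℝ) (hc0 : ∀ s ∈ S, 0 ≤ c s)
    (hcmono : ∀ s ∈ S, ∀ s' ∈ S, s ≤ s' → c s ≤ c s')
    (h : ℕ → ℝ) (hh0 : ∀ b, 0 ≤ h b) (hhmono : Monotone h)
    (r : ℕ → ℝ) (hrmono : Monotone r) (hr0 : r 0 = 0) (hrpos : ∀ v, 1 ≤ v → 0 < r v)
    (B V : ℕ) (hB : 0 < B) (hV : 0 < V)
    :
    ∀ b, 1 ≤ b → b ≤ B → ∀ v, 1 ≤ v → v ≤ V →
      S.filter (fun s => ∀ s' ∈ S,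
          c s + h b + s * (-(r v) + Jval S hS c h r V (b - 1) V) +
            (1 - s) * (if 1 < v then Jval S hS c h r V b (v - 1)
                       else Jval S hS c h r V (b - 1) V) ≤
          c s' + h b + s' * (-(r v) + Jval S hS c h r V (b - 1) V) +
            (1 - s') * (if 1 < v then Jval S hS c h r V b (v - 1)
                        else Jval S hS c h r V (b - 1) V)) =
      S.filter (fun s => ∀ s' ∈ S,
          c s - s * (r v + sigma S hS c h r b (v - 1)) ≤
          c s' - s' * (r v + sigma S hS c h r b (v - 1))) := by
  intro b hb1 hbB v hv1 hvV
  obtain ⟨b', rfl⟩ : ∃ b', b = b' + 1 := ⟨b - 1, by omega⟩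
  simp only [Nat.add_sub_cancel]
  have hW : (if 1 < v then Jval S hS c h r V (b' + 1) (v - 1) else Jval S hS c h r V b' V)
      = Jval S hS c h r V b' V + sigma S hS c h r (b' + 1) (v - 1) := by
    rcases Nat.lt_or_ge v 2 with hv2 | hv2
    · have hv : v = 1 := by omega
      subst hv
      simp [sigma, delta]
    · rw [if_pos (by omega : 1 < v), Jval_eq S hS c h r V b' (v - 1) (by omega)]
  have key : ∀ x : ℝ,
      c x + h (b' + 1) + x * (-(r v) + Jval S hS c h r V b' V) +
        (1 - x) * (if 1 < v then Jval S hS c h r V (b' + 1) (v - 1)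
                   else Jval S hS c h r V b' V)
      = c x - x * (r v + sigma S hS c h r (b' + 1) (v - 1)) +
          (h (b' + 1) + Jval S hS c h r V b' V + sigma S hS c h r (b' + 1) (v - 1)) := by
    intro x
    rw [hW]
    ring
  apply Finset.filter_congr
  intro s hs
  simp only [key, add_le_add_iff_right, eq_iff_iff]
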